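/- Let k, l be natural numbers and ∂₂ : ℂ^k → ℂ^{k+l}, ∂₁ : ℂ^{k+l} → ℂ^l linear maps with ∂₁ ∘ ∂₂ = 0. If J and J' are two subsets of Fin(k+l) of cardinality l such that the corresponding square submatrices ∂₁(J), ∂₂(J), ∂₁(J'), ∂₂(J') are all invertible, then |det ∂₂(J)| / |det ∂₁(J)| = |det ∂₂(J')| / |det ∂₁(J')|. -/

import Mathlib

open Matrix

/-- Auxiliary: the key determinant identity. -/
lemma stmt_11_aux (k l : ℕ)
    (d2 : Matrix (Fin (k + l)) (Fin k) ℂ) (d1 : Matrix (Fin l) (Fin (k + l)) ℂ)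
    (hcomp : d1 * d2 = 0) (eJ eK : (Fin k ⊕ Fin l) ≃ Fin (k + l)) :
    ‖Matrix.det (Matrix.of fun (p q : Fin k ⊕ Fin l) =>
        Sum.elim (fun i => if eJ q = eJ (Sum.inl i) then (1 : ℂ) else 0)
          (fun j => d1 j (eJ q)) p)‖ *
      ‖(d2.submatrix (fun i => eK (Sum.inl i)) id).det‖ =
    ‖(d2.submatrix (fun i => eJ (Sum.inl i)) id).det‖ *
      ‖(d1.submatrix id (fun j => eK (Sum.inr j))).det‖ := by
  classical
  -- the rectangular matrices
  set P0 : Matrix (Fin k ⊕ Fin l) (Fin (k + l)) ℂ :=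
    Matrix.of fun p c => Sum.elim (fun i => if c = eJ (Sum.inl i) then (1 : ℂ) else 0)
      (fun j => d1 j c) p with hP0
  set MK : Matrix (Fin (k + l)) (Fin k ⊕ Fin l) ℂ :=
    Matrix.of fun r q => Sum.elim (fun i => d2 r i)
      (fun j => if r = eK (Sum.inr j) then (1 : ℂ) else 0) q with hMK
  set P : Matrix (Fin k ⊕ Fin l) (Fin k ⊕ Fin l) ℂ :=
    Matrix.of fun (p q : Fin k ⊕ Fin l) =>
      Sum.elim (fun i => if eJ q = eJ (Sum.inl i) then (1 : ℂ) else 0)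
        (fun j => d1 j (eJ q)) p with hP
  have hPsub : P = P0.submatrix id eJ := by
    ext p q; cases p <;> rfl
  set B : Matrix (Fin k ⊕ Fin l) (Fin k ⊕ Fin l) ℂ := MK.submatrix eJ id with hB
  -- the product
  have hmul : P * B = Matrix.fromBlocks (d2.submatrix (fun i => eJ (Sum.inl i)) id)
      (Matrix.of fun i j => if eK (Sum.inr j) = eJ (Sum.inl i) then (1 : ℂ) else 0)
      0 (d1.submatrix id (fun j => eK (Sum.inr j))) := by
    rw [hPsub, hB, Matrix.submatrix_mul_equiv]
    ext p q
    cases p with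
    | inl i =>
      cases q with
      | inl i' =>
        simp [Matrix.mul_apply, Matrix.fromBlocks, hP0, hMK, ite_mul]
      | inr j =>
        simp [Matrix.mul_apply, Matrix.fromBlocks, hP0, hMK, ite_mul]
    | inr j =>
      cases q with
      | inl i' =>
        have h0 : (d1 * d2) j i' = 0 := by rw [hcomp]; rfl
        rw [Matrix.mul_apply] at h0
        simpa [Matrix.mul_apply, Matrix.fromBlocks, hP0, hMK] using h0
      | inr j' =>
        simp [Matrix.mul_apply, Matrix.fromBlocks, hP0, hMK, mul_ite]
  -- determinant of B
  have hBK : MK.submatrix eK id = Matrix.fromBlocks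
      (d2.submatrix (fun i => eK (Sum.inl i)) id) 0
      (d2.submatrix (fun i => eK (Sum.inr i)) id) 1 := by
    ext p q
    cases p with
    | inl i =>
      cases q with
      | inl i' => rfl
      | inr j => simp [hMK, Matrix.fromBlocks, eK.injective.eq_iff]
    | inr j =>
      cases q with
      | inl i' => rfl
      | inr j' => simp [hMK, Matrix.fromBlocks, eK.injective.eq_iff, Matrix.one_apply]
  have hBperm : B = (MK.submatrix eK id).submatrix (eJ.trans eK.symm) id := by
    ext p q; simp [hB]
  have habsB : ‖B.det‖ =
      ‖(d2.submatrix (fun i => eK (Sum.inl i)) id).det‖ := by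
    rw [hBperm, Matrix.det_permute, hBK, Matrix.det_fromBlocks_zero₁₂, Matrix.det_one, mul_one]
    rcases Int.units_eq_one_or (Equiv.Perm.sign (eJ.trans eK.symm)) with h | h <;>
      rw [h] <;> simp
  -- conclude
  have hdet : P.det * B.det = (d2.submatrix (fun i => eJ (Sum.inl i)) id).det *
      (d1.submatrix id (fun j => eK (Sum.inr j))).det := by
    rw [← Matrix.det_mul, hmul, Matrix.det_fromBlocks_zero₂₁]
  calc ‖P.det‖ * ‖(d2.submatrix (fun i => eK (Sum.inl i)) id).det‖
      = ‖P.det‖ * ‖B.det‖ := by rw [habsB]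
    _ = ‖P.det * B.det‖ := (norm_mul _ _).symm
    _ = _ := by rw [hdet, norm_mul]

theorem stmt_11 (k l : ℕ)
    (d2 : Matrix (Fin (k + l)) (Fin k) ℂ) (d1 : Matrix (Fin l) (Fin (k + l)) ℂ)
    (hcomp : d1 * d2 = 0)
    (J J' : Finset (Fin (k + l))) (hJ : J.card = l) (hJ' : J'.card = l)
    (hJc : Jᶜ.card = k) (hJ'c : J'ᶜ.card = k)
    (h1 : IsUnit (d1.submatrix id (fun i => ((J.orderIsoOfFin hJ) i : Fin (k + l)))))
    (h2 : IsUnit (d2.submatrix (fun i => ((Jᶜ.orderIsoOfFin hJc) i : Fin (k + l))) id))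
    (h1' : IsUnit (d1.submatrix id (fun i => ((J'.orderIsoOfFin hJ') i : Fin (k + l)))))
    (h2' : IsUnit (d2.submatrix (fun i => ((J'ᶜ.orderIsoOfFin hJ'c) i : Fin (k + l))) id)) :
    ‖(d2.submatrix (fun i => ((Jᶜ.orderIsoOfFin hJc) i : Fin (k + l))) id).det‖ /
        ‖(d1.submatrix id (fun i => ((J.orderIsoOfFin hJ) i : Fin (k + l)))).det‖ =
      ‖(d2.submatrix (fun i => ((J'ᶜ.orderIsoOfFin hJ'c) i : Fin (k + l))) id).det‖ /
        ‖(d1.submatrix id (fun i => ((J'.orderIsoOfFin hJ') i : Fin (k + l)))).det‖ := by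
  classical
  -- build the equivalences
  have mk : ∀ (K : Finset (Fin (k + l))) (hK : K.card = l) (hKc : Kᶜ.card = k),
      ∃ e : (Fin k ⊕ Fin l) ≃ Fin (k + l),
        (∀ i, e (Sum.inl i) = (Kᶜ.orderIsoOfFin hKc i : Fin (k + l))) ∧
        (∀ j, e (Sum.inr j) = (K.orderIsoOfFin hK j : Fin (k + l))) := by
    intro K hK hKc
    set f : Fin k ⊕ Fin l → Fin (k + l) :=
      Sum.elim (fun i => (Kᶜ.orderIsoOfFin hKc i : Fin (k + l)))
        (fun j => (K.orderIsoOfFin hK j : Fin (k + l))) with hf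
    have hinj : Function.Injective f := by
      intro a b hab
      cases a with
      | inl i =>
        cases b with
        | inl i' =>
          simp only [hf, Sum.elim_inl] at hab
          exact congrArg Sum.inl ((Kᶜ.orderIsoOfFin hKc).injective (Subtype.ext hab))
        | inr j =>
          exfalso
          have h1 : (f (Sum.inl i)) ∈ Kᶜ := (Kᶜ.orderIsoOfFin hKc i).2
          have h2 : (f (Sum.inr j)) ∈ K := (K.orderIsoOfFin hK j).2
          rw [hab] at h1
          exact (Finset.mem_compl.mp h1) h2
      | inr j =>
        cases b with
        | inl i' =>
          exfalso
          have h1 : (f (Sum.inl i')) ∈ Kᶜ := (Kᶜ.orderIsoOfFin hKc i').2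
          have h2 : (f (Sum.inr j)) ∈ K := (K.orderIsoOfFin hK j).2
          rw [← hab] at h1
          exact (Finset.mem_compl.mp h1) h2
        | inr j' =>
          simp only [hf, Sum.elim_inr] at hab
          exact congrArg Sum.inr ((K.orderIsoOfFin hK).injective (Subtype.ext hab))
    have hbij : Function.Bijective f :=
      (Fintype.bijective_iff_injective_and_card f).mpr ⟨hinj, by simp⟩
    exact ⟨Equiv.ofBijective f hbij, fun i => rfl, fun j => rfl⟩
  obtain ⟨eJ, heJl, heJr⟩ := mk J hJ hJc
  obtain ⟨eK, heKl, heKr⟩ := mk J' hJ' hJ'c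
  have hfunl : (fun i => eJ (Sum.inl i)) = fun i => ((Jᶜ.orderIsoOfFin hJc) i : Fin (k + l)) :=
    funext heJl
  have hfunr : (fun j => eJ (Sum.inr j)) = fun i => ((J.orderIsoOfFin hJ) i : Fin (k + l)) :=
    funext heJr
  have hfunl' : (fun i => eK (Sum.inl i)) = fun i => ((J'ᶜ.orderIsoOfFin hJ'c) i : Fin (k + l)) :=
    funext heKl
  have hfunr' : (fun j => eK (Sum.inr j)) = fun i => ((J'.orderIsoOfFin hJ') i : Fin (k + l)) :=
    funext heKr
  have e1 := stmt_11_aux k l d2 d1 hcomp eJ eJ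
  have e2 := stmt_11_aux k l d2 d1 hcomp eJ eK
  rw [hfunl, hfunr] at e1
  rw [hfunl, hfunl', hfunr'] at e2
  -- nonvanishing
  have hne : ∀ (n : Type) [Fintype n] [DecidableEq n] (A : Matrix n n ℂ),
      IsUnit A → ‖A.det‖ ≠ 0 := by
    intro n _ _ A hA
    have := (Matrix.isUnit_iff_isUnit_det A).mp hA
    simpa using isUnit_iff_ne_zero.mp this
  have n1 := hne _ _ h1
  have n2 := hne _ _ h2
  have n1' := hne _ _ h1'
  have n2' := hne _ _ h2'
  -- from e1 : |P| * |d2 J| = |d2 J| * |d1 J|, so |P| = |d1 J|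
  have hPabs : ‖Matrix.det (Matrix.of fun (p q : Fin k ⊕ Fin l) =>
      Sum.elim (fun i => if eJ q = eJ (Sum.inl i) then (1 : ℂ) else 0)
        (fun j => d1 j (eJ q)) p)‖ =
      ‖(d1.submatrix id (fun i => ((J.orderIsoOfFin hJ) i : Fin (k + l)))).det‖ :=
    mul_right_cancel₀ n2 (e1.trans (mul_comm _ _))
  rw [hPabs] at e2
  rw [div_eq_div_iff n1 n1']
  linear_combination -e2
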